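/- Let τ > 0 and define the clipped angle θ̄*(τ,s) = arccos( max(−1, min(1, cosh(τ/2) − e^{−s}/2) ) ) for all s ∈ ℝ. Then for every χ ∈ ℝ with −1 < cosh(τ/2) − e^{−χ}/2 < 1, the integral ∫_{−∞}^{χ} (1 − θ̄*(τ,s)/π) ds converges and equals (1/π) ∫_{0}^{π − θ*(τ,χ)} ( s·sin s / (cos s + cosh(τ/2)) ) ds, where θ*(τ,χ) = arccos(cosh(τ/2) − e^{−χ}/2). -/

import Mathlib

/-- `θ*(τ,χ) = arccos(cosh(τ/2) - e^{-χ}/2)`. -/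
noncomputable def thetaStar (τ χ : ℝ) : ℝ :=
  Real.arccos (Real.cosh (τ / 2) - Real.exp (-χ) / 2)

/-- The clipped angle `θ̄*(τ,s) = arccos(max(-1, min(1, cosh(τ/2) - e^{-s}/2)))`;
`θ̄*(τ,s)/π` is the limiting density of horizontal tiles at macroscopic position `(τ,s)`. -/
noncomputable def thetaBar (τ s : ℝ) : ℝ :=
  Real.arccos (max (-1) (min 1 (Real.cosh (τ / 2) - Real.exp (-s) / 2)))

/-- The height function of the limit shape: for `(τ,χ)` in the bulk,
`∫_{-∞}^{χ} (1 - θ̄*(τ,s)/π) ds` converges and equals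
`(1/π) ∫_0^{π-θ*(τ,χ)} s sin s/(cos s + cosh(τ/2)) ds`. -/
theorem limit_shape_height (τ χ : ℝ) (hτ : 0 < τ)
    (hbulk₁ : -1 < Real.cosh (τ / 2) - Real.exp (-χ) / 2)
    (hbulk₂ : Real.cosh (τ / 2) - Real.exp (-χ) / 2 < 1) :
    MeasureTheory.IntegrableOn (fun s : ℝ => 1 - thetaBar τ s / Real.pi)
      (Set.Iic χ) MeasureTheory.volume ∧
    ∫ s in Set.Iic χ, (1 - thetaBar τ s / Real.pi) =
      (1 / Real.pi) *
        ∫ s in (0 : ℝ)..(Real.pi - thetaStar τ χ),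
          s * Real.sin s / (Real.cos s + Real.cosh (τ / 2)) := by
  have hπ : (0:ℝ) < Real.pi := Real.pi_pos
  set c : ℝ := Real.cosh (τ / 2) with hc_def
  have hc : 1 < c := Real.one_lt_cosh.mpr (by positivity)
  set F : ℝ → ℝ := fun s => 1 - thetaBar τ s / Real.pi with hF_def
  have hFcont : Continuous F := by
    apply Continuous.sub continuous_const
    apply Continuous.div_const
    exact Real.continuous_arccos.comp
      (continuous_const.max (continuous_const.min
        (continuous_const.sub ((Real.continuous_exp.comp continuous_neg).div_const 2))))
  set s₀ : ℝ := -Real.log (2 * (c + 1)) with hs₀_def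
  have h2c1 : (0:ℝ) < 2 * (c + 1) := by linarith
  have hs₀χ : s₀ < χ := by
    have h1 : Real.exp (-χ) < 2 * (c + 1) := by linarith
    have h2 := Real.log_lt_log (Real.exp_pos _) h1
    rw [Real.log_exp] at h2
    rw [hs₀_def]; linarith
  have hF0 : ∀ s ∈ Set.Iic s₀, F s = 0 := by
    intro s hs
    have h1 : Real.log (2 * (c + 1)) ≤ -s := by
      simp only [Set.mem_Iic, hs₀_def] at hs; linarith
    have h2 : 2 * (c + 1) ≤ Real.exp (-s) := by
      calc 2 * (c + 1) = Real.exp (Real.log (2 * (c + 1))) := (Real.exp_log h2c1).symm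
        _ ≤ Real.exp (-s) := Real.exp_le_exp.mpr h1
    have h3 : c - Real.exp (-s) / 2 ≤ -1 := by linarith
    have h4 : min 1 (c - Real.exp (-s) / 2) = c - Real.exp (-s) / 2 :=
      min_eq_right (by linarith)
    have h5 : max (-1) (c - Real.exp (-s) / 2) = -1 := max_eq_left h3
    simp only [hF_def, thetaBar, ← hc_def, h4, h5, Real.arccos_neg_one]
    field_simp
    norm_num
  have hint1 : MeasureTheory.IntegrableOn F (Set.Iic s₀) MeasureTheory.volume := by
    rw [MeasureTheory.integrableOn_congr_fun hF0 measurableSet_Iic]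
    exact MeasureTheory.integrableOn_zero
  have hint2 : MeasureTheory.IntegrableOn F (Set.Ioc s₀ χ) MeasureTheory.volume :=
    (hFcont.integrableOn_Icc).mono_set Set.Ioc_subset_Icc_self
  have hIic : Set.Iic χ = Set.Iic s₀ ∪ Set.Ioc s₀ χ :=
    (Set.Iic_union_Ioc_eq_Iic hs₀χ.le).symm
  have hintF : MeasureTheory.IntegrableOn F (Set.Iic χ) MeasureTheory.volume := by
    rw [hIic]; exact hint1.union hint2
  have hsplit : ∫ s in Set.Iic χ, F s = ∫ s in s₀..χ, F s := by
    rw [hIic, MeasureTheory.setIntegral_union (Set.Iic_disjoint_Ioc le_rfl)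
        measurableSet_Ioc hint1 hint2,
      MeasureTheory.setIntegral_eq_zero_of_forall_eq_zero hF0,
      intervalIntegral.integral_of_le hs₀χ.le]
    ring
  -- substitution
  set θ : ℝ := thetaStar τ χ with hθ_def
  set b : ℝ := Real.pi - θ with hb_def
  have hθ0 : 0 ≤ θ := Real.arccos_nonneg _
  have hθπ : θ ≤ Real.pi := Real.arccos_le_pi _
  have hb0 : 0 ≤ b := by rw [hb_def]; linarith
  have hbπ : b ≤ Real.pi := by rw [hb_def]; linarith
  have huIcc : Set.uIcc (0:ℝ) b = Set.Icc 0 b := Set.uIcc_of_le hb0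
  set g : ℝ → ℝ := fun u => -Real.log (2 * (c + Real.cos u)) with hg_def
  have hpos : ∀ u : ℝ, 0 < 2 * (c + Real.cos u) := fun u => by
    have := Real.neg_one_le_cos u; linarith
  have hg0 : g 0 = s₀ := by simp [hg_def, hs₀_def]
  have hgb : g b = χ := by
    have hcosθ : Real.cos θ = c - Real.exp (-χ) / 2 := by
      rw [hθ_def, thetaStar, ← hc_def]
      exact Real.cos_arccos hbulk₁.le hbulk₂.le
    have hcosb : Real.cos b = -(c - Real.exp (-χ) / 2) := by
      rw [hb_def, Real.cos_pi_sub, hcosθ]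
    rw [hg_def]
    simp only [hcosb]
    have : 2 * (c + -(c - Real.exp (-χ) / 2)) = Real.exp (-χ) := by ring
    rw [this, Real.log_exp]; ring
  have hderiv : ∀ u ∈ Set.uIcc (0:ℝ) b,
      HasDerivAt g (Real.sin u / (c + Real.cos u)) u := by
    intro u _
    have h1 : HasDerivAt (fun u : ℝ => 2 * (c + Real.cos u)) (2 * (-Real.sin u)) u :=
      ((Real.hasDerivAt_cos u).const_add c).const_mul 2
    have h2 := (h1.log (ne_of_gt (hpos u))).neg
    refine h2.congr_deriv ?_
    have h3 : c + Real.cos u ≠ 0 := by have := hpos u; intro h; rw [h] at this; linarith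
    rw [mul_neg, neg_div, neg_neg, mul_div_mul_left _ _ two_ne_zero]
  have hcont' : ContinuousOn (fun u => Real.sin u / (c + Real.cos u))
      (Set.uIcc (0:ℝ) b) :=
    Real.continuous_sin.continuousOn.div
      (continuous_const.add Real.continuous_cos).continuousOn
      (fun u _ => by have := hpos u; intro h; rw [h] at this; linarith)
  have hsub := intervalIntegral.integral_comp_smul_deriv hderiv hcont' hFcont
  rw [hg0, hgb] at hsub
  have hFg : Set.EqOn (fun u => (Real.sin u / (c + Real.cos u)) • (F ∘ g) u)
      (fun u => (1 / Real.pi) * (u * Real.sin u / (Real.cos u + c)))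
      (Set.uIcc (0:ℝ) b) := by
    intro u hu
    rw [huIcc] at hu
    obtain ⟨hu0, hub⟩ := hu
    have huπ : u ≤ Real.pi := le_trans hub hbπ
    have hexp : Real.exp (-g u) = 2 * (c + Real.cos u) := by
      rw [hg_def]; simp [Real.exp_log (hpos u)]
    have hval : c - Real.exp (-(g u)) / 2 = -Real.cos u := by
      rw [hexp]; ring
    have hmin : min 1 (-Real.cos u) = -Real.cos u :=
      min_eq_right (by have := Real.neg_one_le_cos u; linarith)
    have hmax : max (-1) (-Real.cos u) = -Real.cos u :=
      max_eq_right (by have := Real.cos_le_one u; linarith)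
    have hbar : thetaBar τ (g u) = Real.pi - u := by
      rw [thetaBar, ← hc_def, hval, hmin, hmax, Real.arccos_neg,
        Real.arccos_cos hu0 huπ]
    have hFgu : F (g u) = u / Real.pi := by
      rw [hF_def]
      simp only [hbar]
      field_simp
      ring
    simp only [Function.comp, hFgu, smul_eq_mul]
    have hcu : c + Real.cos u ≠ 0 := by have := hpos u; intro h; rw [h] at this; linarith
    have hcu' : Real.cos u + c ≠ 0 := by rwa [add_comm]
    rw [div_mul_div_comm, one_div_mul_eq_div, div_div,
      div_eq_div_iff (mul_ne_zero hcu hπ.ne') (mul_ne_zero hcu' hπ.ne')]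
    ring
  have hfinal : ∫ u in (0:ℝ)..b, (Real.sin u / (c + Real.cos u)) • (F ∘ g) u =
      (1 / Real.pi) * ∫ u in (0:ℝ)..b, u * Real.sin u / (Real.cos u + c) := by
    rw [intervalIntegral.integral_congr hFg, intervalIntegral.integral_const_mul]
  refine ⟨hintF, ?_⟩
  calc ∫ s in Set.Iic χ, (1 - thetaBar τ s / Real.pi) = ∫ s in s₀..χ, F s := hsplit
    _ = ∫ u in (0:ℝ)..b, (Real.sin u / (c + Real.cos u)) • (F ∘ g) u := hsub.symm
    _ = (1 / Real.pi) * ∫ u in (0:ℝ)..b, u * Real.sin u / (Real.cos u + c) := hfinal
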